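/- Let S ∈ ℂ[t] be any polynomial with complex coefficients, m a natural number, and set G := subst T (S·y^m) ∈ A⟦X⟧. Then for every 0 ≤ i ≤ n−4 one has κ²·∂_i G = m·(θH̃_i)·G + 2·H̃_i·(θG). (This is the formal counterpart, with κ² made explicit, of the paper's Proposition ∂_{i,Q} g = [g, h̃_i]₁ = h̃_i′·W g + 2·h̃_i·D g for a modular form g of weight m, every weight-m form being of the shape f^m·R(t).) -/

import Mathlib

set_option linter.unusedSectionVars false


noncomputable section

open PowerSeries

/-- The ring of accessory parameters: polynomials in `ρ_0, …, ρ_{n-4}` over `ℂ`. -/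
abbrev AccRing (n : ℕ) : Type := MvPolynomial (Fin (n - 3)) ℂ

/-- Coefficientwise partial derivative of a power series with respect to the
accessory parameter `ρ_i`. -/
noncomputable def pd {n : ℕ} (i : Fin (n - 3)) (u : PowerSeries (AccRing n)) :
    PowerSeries (AccRing n) :=
  PowerSeries.mk fun m => MvPolynomial.pderiv i (PowerSeries.coeff (R := (AccRing n)) m u)

/-- The polynomial `P = t·∏_{j=1}^{n-2}(t - α_j)`, viewed in `A⟦t⟧`. -/
noncomputable def Ppoly (n : ℕ) (α : Fin (n - 2) → ℂ) : PowerSeries (AccRing n) :=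
  X * ∏ j, (X - C (R := (AccRing n)) (MvPolynomial.C (α j)))

/-- The polynomial `P̂ = P/t = ∏_{j=1}^{n-2}(t - α_j)`, viewed in `A⟦t⟧`. -/
noncomputable def PhatPoly (n : ℕ) (α : Fin (n - 2) → ℂ) : PowerSeries (AccRing n) :=
  ∏ j, (X - C (R := (AccRing n)) (MvPolynomial.C (α j)))

/-- `κ = P̂(0) = (-1)^(n-2) ∏ α_j`. -/
noncomputable def kappa (n : ℕ) (α : Fin (n - 2) → ℂ) : ℂ :=
  (-1) ^ (n - 2) * ∏ j, α j

/-- `P1 = (1 - n/2)²·t^(n-3) - ∑_{i=0}^{n-4} ρ_i·t^i`, viewed in `A⟦t⟧`. -/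
noncomputable def P1poly (n : ℕ) : PowerSeries (AccRing n) :=
  C (R := (AccRing n)) (MvPolynomial.C ((1 - (n : ℂ) / 2) ^ 2)) * X ^ (n - 3)
    - ∑ i : Fin (n - 3), C (R := (AccRing n)) (MvPolynomial.X i) * X ^ (i : ℕ)

/-- The differential operator `L u = (P·u')' + P1·u`. -/
noncomputable def Lop (n : ℕ) (α : Fin (n - 2) → ℂ) (u : PowerSeries (AccRing n)) :
    PowerSeries (AccRing n) :=
  derivative (AccRing n) (Ppoly n α * derivative (AccRing n) u) + P1poly n * u

/-- Formal antiderivative with zero constant term. -/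
noncomputable def integ {A : Type*} [CommRing A] [Algebra ℚ A] (u : PowerSeries A) :
    PowerSeries A :=
  PowerSeries.mk fun m => if m = 0 then 0 else ((m : ℚ)⁻¹) • PowerSeries.coeff (R := A) (m - 1) u

/-- Formal substitution of the power series `S` (with zero constant term) into `G`. -/
noncomputable def substS {A : Type*} [CommSemiring A] (S G : PowerSeries A) : PowerSeries A :=
  PowerSeries.mk fun m =>
    ∑ j ∈ Finset.range (m + 1), PowerSeries.coeff (R := A) j G * PowerSeries.coeff (R := A) m (S ^ j)

/-- The operator `θ G = X·dG/dX`. -/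
noncomputable def theta {A : Type*} [CommRing A] (G : PowerSeries A) : PowerSeries A :=
  PowerSeries.X * PowerSeries.derivative A G

/-- The formal Eichler integral: divide the `m`-th coefficient by `m³`. -/
noncomputable def eich {A : Type*} [CommRing A] [Algebra ℚ A] (H : PowerSeries A) :
    PowerSeries A :=
  PowerSeries.mk fun m => (((m : ℚ) ^ 3)⁻¹) • PowerSeries.coeff (R := A) m H

/-- Formal exponential of a power series with zero constant term. -/
noncomputable def expS {A : Type*} [CommRing A] [Algebra ℚ A] (S : PowerSeries A) :
    PowerSeries A :=
  substS S (PowerSeries.exp A)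

variable {A : Type*} [CommRing A]

lemma coeff_substS (S G : PowerSeries A) (m : ℕ) :
    coeff (R := A) m (substS S G) = ∑ j ∈ Finset.range (m + 1), coeff (R := A) j G * coeff (R := A) m (S ^ j) := by
  simp [substS]

lemma coeff_pow_eq_zero {S : PowerSeries A} (hS : constantCoeff (R := A) S = 0)
    {j m : ℕ} (h : m < j) : coeff (R := A) m (S ^ j) = 0 := by
  obtain ⟨S₁, rfl⟩ := X_dvd_iff.mpr hS
  rw [mul_pow, coeff_X_pow_mul', if_neg (by omega)]

lemma substS_add (S G H : PowerSeries A) :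
    substS S (G + H) = substS S G + substS S H := by
  ext m
  simp [coeff_substS, add_mul, Finset.sum_add_distrib]

lemma substS_C (S : PowerSeries A) (a : A) : substS S (C (R := A) a) = C (R := A) a := by
  ext m
  rw [coeff_substS, Finset.sum_eq_single 0]
  · simp only [coeff_C, coeff_one, if_pos rfl, pow_zero]
    rcases eq_or_ne m 0 with rfl|hm
    · simp
    · simp [hm]
  · intro j _ hj; simp [coeff_C, hj]
  · simp

lemma substS_X (S : PowerSeries A) (hS : constantCoeff (R := A) S = 0) : substS S X = S := by
  ext m
  rw [coeff_substS]
  rcases Nat.eq_zero_or_pos m with rfl | hm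
  · simp [coeff_X, hS]
  · rw [Finset.sum_eq_single 1]
    · simp
    · intro j hj hj1; simp [coeff_X, hj1]
    · intro h; exact absurd (Finset.mem_range.mpr (by omega)) h

lemma substS_mul {S : PowerSeries A} (hS : constantCoeff (R := A) S = 0) (G H : PowerSeries A) :
    substS S (G * H) = substS S G * substS S H := by
  ext m
  rw [coeff_substS, coeff_mul]
  set f : ℕ × ℕ → A := fun x => coeff (R := A) x.1 G * coeff (R := A) x.2 H * coeff (R := A) m (S ^ (x.1 + x.2)) with hf
  have hR : ∑ p ∈ Finset.HasAntidiagonal.antidiagonal m,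
      coeff (R := A) p.1 (substS S G) * coeff (R := A) p.2 (substS S H)
      = ∑ a ∈ Finset.range (m+1), ∑ b ∈ Finset.range (m+1), f (a, b) := by
    have step : ∀ p ∈ Finset.HasAntidiagonal.antidiagonal m,
        coeff (R := A) p.1 (substS S G) * coeff (R := A) p.2 (substS S H)
        = ∑ a ∈ Finset.range (m+1), ∑ b ∈ Finset.range (m+1),
            (coeff (R := A) a G * coeff (R := A) b H) * (coeff (R := A) p.1 (S^a) * coeff (R := A) p.2 (S^b)) := by
      intro p hp
      have hp' := Finset.HasAntidiagonal.mem_antidiagonal.mp hp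
      have h1 : coeff (R := A) p.1 (substS S G)
          = ∑ a ∈ Finset.range (m+1), coeff (R := A) a G * coeff (R := A) p.1 (S^a) := by
        rw [coeff_substS]
        refine Finset.sum_subset (by intro x hx; simp at hx ⊢; omega) ?_
        intro a _ ha
        simp only [Finset.mem_range, not_lt] at ha
        rw [coeff_pow_eq_zero hS (by omega), mul_zero]
      have h2 : coeff (R := A) p.2 (substS S H)
          = ∑ b ∈ Finset.range (m+1), coeff (R := A) b H * coeff (R := A) p.2 (S^b) := by
        rw [coeff_substS]
        refine Finset.sum_subset (by intro x hx; simp at hx ⊢; omega) ?_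
        intro b _ hb
        simp only [Finset.mem_range, not_lt] at hb
        rw [coeff_pow_eq_zero hS (by omega), mul_zero]
      rw [h1, h2, Finset.sum_mul_sum]
      apply Finset.sum_congr rfl; intro a _; apply Finset.sum_congr rfl; intro b _
      ring
    rw [Finset.sum_congr rfl step, Finset.sum_comm]
    apply Finset.sum_congr rfl; intro a _
    rw [Finset.sum_comm]
    apply Finset.sum_congr rfl; intro b _
    rw [← Finset.mul_sum]
    have : ∑ p ∈ Finset.HasAntidiagonal.antidiagonal m, coeff (R := A) p.1 (S^a) * coeff (R := A) p.2 (S^b)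
        = coeff (R := A) m (S^a * S^b) := (coeff_mul m _ _).symm
    rw [this, ← pow_add]
  rw [hR]
  -- now LHS
  have hL : ∑ j ∈ Finset.range (m + 1), coeff (R := A) j (G * H) * coeff (R := A) m (S ^ j)
      = ∑ j ∈ Finset.range (m+1), ∑ x ∈ Finset.HasAntidiagonal.antidiagonal j, f x := by
    apply Finset.sum_congr rfl; intro j _
    rw [coeff_mul, Finset.sum_mul]
    apply Finset.sum_congr rfl; intro x hx
    have hx' := Finset.HasAntidiagonal.mem_antidiagonal.mp hx
    rw [hf]; dsimp only; rw [hx']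
  rw [hL, ← Finset.sum_biUnion ?hd]
  case hd =>
    intro i _ j _ hij
    simp only [Finset.disjoint_left]
    intro x hxi hxj
    exact hij ((Finset.HasAntidiagonal.mem_antidiagonal.mp hxi).symm.trans (Finset.HasAntidiagonal.mem_antidiagonal.mp hxj))
  have hset : (Finset.range (m+1)).biUnion (fun j => Finset.HasAntidiagonal.antidiagonal j)
      = (Finset.range (m+1) ×ˢ Finset.range (m+1)).filter (fun x => x.1 + x.2 ≤ m) := by
    ext x
    simp only [Finset.mem_biUnion, Finset.mem_range, Finset.HasAntidiagonal.mem_antidiagonal,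
      Finset.mem_filter, Finset.mem_product]
    constructor
    · rintro ⟨j, hj, rfl⟩; omega
    · rintro ⟨⟨h1, h2⟩, h3⟩; exact ⟨x.1 + x.2, by omega, rfl⟩
  rw [hset, ← Finset.sum_product']
  refine Finset.sum_subset (Finset.filter_subset _ _) ?_
  intro x hx1 hx
  simp only [Finset.mem_filter, not_and, not_le] at hx
  rw [hf]; dsimp only
  rw [coeff_pow_eq_zero hS (hx hx1), mul_zero]

lemma substS_one (S : PowerSeries A) : substS S 1 = 1 := by
  have := substS_C S 1; simpa using this

lemma substS_pow {S : PowerSeries A} (hS : constantCoeff (R := A) S = 0) (G : PowerSeries A) (k : ℕ) :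
    substS S (G ^ k) = (substS S G) ^ k := by
  induction k with
  | zero => simpa using substS_one S
  | succ k ih => rw [pow_succ, substS_mul hS, ih, pow_succ]

lemma substS_sum {S : PowerSeries A} {ι : Type*} (s : Finset ι) (f : ι → PowerSeries A) :
    substS S (∑ j ∈ s, f j) = ∑ j ∈ s, substS S (f j) := by
  classical
  induction s using Finset.induction with
  | empty => ext m; simp [coeff_substS]
  | insert a s h ih => rw [Finset.sum_insert h, substS_add, ih, Finset.sum_insert h]

lemma constantCoeff_substS (S G : PowerSeries A) :
    constantCoeff (R := A) (substS S G) = constantCoeff (R := A) G := by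
  have := coeff_substS S G 0
  simpa using this

lemma substS_congr {S G G' : PowerSeries A} {m : ℕ}
    (h : ∀ k ≤ m, coeff (R := A) k G = coeff (R := A) k G') :
    coeff (R := A) m (substS S G) = coeff (R := A) m (substS S G') := by
  rw [coeff_substS, coeff_substS]
  apply Finset.sum_congr rfl
  intro j hj
  rw [h j (by simpa using Nat.lt_succ_iff.mp (Finset.mem_range.mp hj))]

noncomputable def ptrunc (N : ℕ) (G : PowerSeries A) : PowerSeries A :=
  ∑ j ∈ Finset.range N, C (R := A) (coeff (R := A) j G) * X ^ j

lemma coeff_ptrunc (N : ℕ) (G : PowerSeries A) (k : ℕ) :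
    coeff (R := A) k (ptrunc N G) = if k < N then coeff (R := A) k G else 0 := by
  rw [ptrunc, map_sum]
  simp only [coeff_C_mul, coeff_X_pow]
  by_cases h : k < N
  · rw [if_pos h, Finset.sum_eq_single k (fun j _ hj => by simp [Ne.symm hj])
      (fun hk => absurd (Finset.mem_range.mpr h) hk)]
    simp
  · rw [if_neg h]
    apply Finset.sum_eq_zero
    intro j hj
    simp only [Finset.mem_range] at hj
    rw [if_neg (by omega), mul_zero]
lemma substS_ptrunc (S : PowerSeries A) (hS : constantCoeff (R := A) S = 0) (N : ℕ) (G : PowerSeries A) :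
    substS S (ptrunc N G) = ∑ j ∈ Finset.range N, C (R := A) (coeff (R := A) j G) * S ^ j := by
  rw [ptrunc, substS_sum]
  apply Finset.sum_congr rfl
  intro j _
  rw [substS_mul hS, substS_C, substS_pow hS, substS_X S hS]

lemma coeff_substS_ptrunc {S : PowerSeries A} (G : PowerSeries A) {m N : ℕ} (h : m < N) :
    coeff (R := A) m (substS S G) = coeff (R := A) m (substS S (ptrunc N G)) := by
  apply substS_congr
  intro k hk
  rw [coeff_ptrunc, if_pos (by omega)]

lemma substS_X_right (G : PowerSeries A) : substS X G = G := by
  ext m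
  rw [coeff_substS, Finset.sum_eq_single m]
  · rw [← pow_one (X : PowerSeries A), ← pow_mul, coeff_X_pow, if_pos (by omega), mul_one]
  · intro j _ hj
    rw [← pow_one (X : PowerSeries A), ← pow_mul, coeff_X_pow, if_neg (by omega), mul_zero]
  · intro h; simp at h

lemma substS_assoc {Q T : PowerSeries A} (hQ : constantCoeff (R := A) Q = 0)
    (hT : constantCoeff (R := A) T = 0) (G : PowerSeries A) :
    substS T (substS Q G) = substS (substS T Q) G := by
  have hTQ0 : constantCoeff (R := A) (substS T Q) = 0 := by
    rw [constantCoeff_substS]; exact hQ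
  ext m
  have h1 : coeff (R := A) m (substS T (substS Q G))
      = coeff (R := A) m (substS T (substS Q (ptrunc (m+1) G))) := by
    apply substS_congr
    intro k hk
    exact coeff_substS_ptrunc G (by omega)
  rw [h1, coeff_substS_ptrunc (S := substS T Q) G (Nat.lt_succ_self m)]
  congr 1
  rw [substS_ptrunc Q hQ, substS_sum, substS_ptrunc _ hTQ0]
  apply Finset.sum_congr rfl
  intro j _
  rw [substS_mul hT, substS_C, substS_pow hT]

variable {n : ℕ} (i : Fin (n - 3))

lemma coeff_pd (u : PowerSeries (AccRing n)) (m : ℕ) :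
    coeff (R := (AccRing n)) m (pd i u) = MvPolynomial.pderiv i (coeff (R := (AccRing n)) m u) := by
  simp [pd]

lemma pd_add (u v : PowerSeries (AccRing n)) : pd i (u + v) = pd i u + pd i v := by
  ext m; simp [coeff_pd]

lemma pd_sub (u v : PowerSeries (AccRing n)) : pd i (u - v) = pd i u - pd i v := by
  ext m; simp [coeff_pd]

lemma pd_sum {ι : Type*} (s : Finset ι) (f : ι → PowerSeries (AccRing n)) :
    pd i (∑ j ∈ s, f j) = ∑ j ∈ s, pd i (f j) := by
  ext m; simp [coeff_pd]

lemma pd_mul (u v : PowerSeries (AccRing n)) :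
    pd i (u * v) = pd i u * v + u * pd i v := by
  ext m : 1
  rw [coeff_pd, map_add, coeff_mul, coeff_mul, coeff_mul, map_sum, ← Finset.sum_add_distrib]
  apply Finset.sum_congr rfl
  intro p _
  rw [Derivation.leibniz, smul_eq_mul, smul_eq_mul, coeff_pd, coeff_pd]
  ring

lemma pd_C (a : AccRing n) : pd i (C (R := (AccRing n)) a) = C (R := (AccRing n)) (MvPolynomial.pderiv i a) := by
  ext m
  simp only [coeff_pd, coeff_C]
  split <;> simp

lemma pd_X : pd i (X : PowerSeries (AccRing n)) = 0 := by
  ext m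
  simp only [coeff_pd, coeff_X, map_zero]
  split <;> simp

lemma pd_one : pd i (1 : PowerSeries (AccRing n)) = 0 := by
  have := pd_C i 1; simpa using this

lemma pd_natCast (k : ℕ) : pd i (k : PowerSeries (AccRing n)) = 0 := by
  have := pd_C i (k : AccRing n); rw [map_natCast] at this; simpa using this

lemma pd_derivative (u : PowerSeries (AccRing n)) :
    pd i (derivative (AccRing n) u) = derivative (AccRing n) (pd i u) := by
  ext m
  rw [coeff_pd, coeff_derivative, coeff_derivative, coeff_pd]
  rw [mul_comm _ ((m:AccRing n)+1), mul_comm _ ((m:AccRing n)+1)]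
  have : ((m : AccRing n) + 1) = ((m+1 : ℕ) : AccRing n) := by push_cast; ring
  rw [this, ← nsmul_eq_mul, ← nsmul_eq_mul, map_nsmul]

lemma pd_pow (u : PowerSeries (AccRing n)) (k : ℕ) :
    pd i (u ^ (k+1)) = (k+1 : PowerSeries (AccRing n)) * u ^ k * pd i u := by
  induction k with
  | zero => simp [pd_mul]
  | succ k ih =>
    rw [pow_succ, pd_mul, ih]
    push_cast
    ring

lemma substS_zero (S : PowerSeries A) : substS S 0 = 0 := by
  have := substS_C S 0; simpa using this

lemma derivative_substS_monomial {S : PowerSeries A} (hS : constantCoeff (R := A) S = 0) (a : A) :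
    ∀ j : ℕ, derivative A (substS S (C (R := A) a * X ^ j))
      = substS S (derivative A (C (R := A) a * X ^ j)) * derivative A S
  | 0 => by
    simp only [pow_zero, mul_one, substS_C, derivative_C, substS_zero, zero_mul]
  | (j+1) => by
    have hU : (C (R := A) a * X ^ (j+1) : PowerSeries A) = (C (R := A) a * X ^ j) * X := by ring
    have hd : derivative A ((C (R := A) a * X ^ j) * X)
        = (C (R := A) a * X ^ j) + X * derivative A (C (R := A) a * X ^ j) := by
      rw [Derivation.leibniz, smul_eq_mul, smul_eq_mul, derivative_X, mul_one]
    rw [hU]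
    conv_lhs => rw [substS_mul hS (C (R := A) a * X ^ j) X, substS_X _ hS, Derivation.leibniz,
      derivative_substS_monomial hS a j, smul_eq_mul, smul_eq_mul]
    conv_rhs => rw [hd, substS_add, substS_mul hS X (derivative A (C (R := A) a * X ^ j)),
      substS_X _ hS]
    ring

lemma derivative_substS {S : PowerSeries A} (hS : constantCoeff (R := A) S = 0) (G : PowerSeries A) :
    derivative A (substS S G) = substS S (derivative A G) * derivative A S := by
  ext m : 1
  have e1 : coeff (R := A) m (derivative A (substS S G))
      = coeff (R := A) m (derivative A (substS S (ptrunc (m+2) G))) := by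
    rw [coeff_derivative, coeff_derivative, coeff_substS_ptrunc (N := m+2) G (by omega)]
  have e2 : coeff (R := A) m (substS S (derivative A G) * derivative A S)
      = coeff (R := A) m (substS S (derivative A (ptrunc (m+2) G)) * derivative A S) := by
    rw [coeff_mul, coeff_mul]
    apply Finset.sum_congr rfl
    intro p hp
    have hp' := Finset.HasAntidiagonal.mem_antidiagonal.mp hp
    congr 1
    apply substS_congr
    intro k hk
    rw [coeff_derivative, coeff_derivative, coeff_ptrunc, if_pos (by omega)]
  rw [e1, e2]
  congr 1
  rw [ptrunc, substS_sum, map_sum, map_sum, substS_sum, Finset.sum_mul]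
  apply Finset.sum_congr rfl
  intro j _
  exact derivative_substS_monomial hS _ j

lemma pd_substS_monomial {S : PowerSeries (AccRing n)} (hS : constantCoeff (R := (AccRing n)) S = 0)
    (a : AccRing n) :
    ∀ j : ℕ, pd i (substS S (C (R := (AccRing n)) a * X ^ j))
      = substS S (pd i (C (R := (AccRing n)) a * X ^ j))
        + substS S (derivative (AccRing n) (C (R := (AccRing n)) a * X ^ j)) * pd i S
  | 0 => by
    simp only [pow_zero, mul_one, substS_C, pd_C, derivative_C, substS_zero, zero_mul, add_zero]
  | (j+1) => by
    have hU : (C (R := (AccRing n)) a * X ^ (j+1) : PowerSeries (AccRing n))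
        = (C (R := (AccRing n)) a * X ^ j) * X := by ring
    have hd : derivative (AccRing n) ((C (R := (AccRing n)) a * X ^ j) * X)
        = (C (R := (AccRing n)) a * X ^ j) + X * derivative (AccRing n) (C (R := (AccRing n)) a * X ^ j) := by
      rw [Derivation.leibniz, smul_eq_mul, smul_eq_mul, derivative_X, mul_one]
    have hpd : pd i ((C (R := (AccRing n)) a * X ^ j) * X) = pd i (C (R := (AccRing n)) a * X ^ j) * X := by
      rw [pd_mul, pd_X, mul_zero, add_zero]
    rw [hU]
    conv_lhs => rw [substS_mul hS (C (R := (AccRing n)) a * X ^ j) X, substS_X _ hS, pd_mul,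
      pd_substS_monomial hS a j]
    conv_rhs => rw [hpd, hd, substS_mul hS (pd i (C (R := (AccRing n)) a * X ^ j)) X, substS_X _ hS,
      substS_add, substS_mul hS X (derivative (AccRing n) (C (R := (AccRing n)) a * X ^ j)),
      substS_X _ hS]
    ring

lemma pd_substS {S : PowerSeries (AccRing n)} (hS : constantCoeff (R := (AccRing n)) S = 0)
    (G : PowerSeries (AccRing n)) :
    pd i (substS S G)
      = substS S (pd i G) + substS S (derivative (AccRing n) G) * pd i S := by
  have hpdS0 : coeff (R := (AccRing n)) 0 (pd i S) = 0 := by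
    rw [coeff_pd, coeff_zero_eq_constantCoeff, hS, map_zero]
  ext m : 1
  have e1 : coeff (R := (AccRing n)) m (pd i (substS S G))
      = coeff (R := (AccRing n)) m (pd i (substS S (ptrunc (m+1) G))) := by
    rw [coeff_pd, coeff_pd, coeff_substS_ptrunc (N := m+1) G (by omega)]
  have e2 : coeff (R := (AccRing n)) m (substS S (pd i G))
      = coeff (R := (AccRing n)) m (substS S (pd i (ptrunc (m+1) G))) := by
    apply substS_congr
    intro k hk
    rw [coeff_pd, coeff_pd, coeff_ptrunc, if_pos (by omega)]
  have e3 : coeff (R := (AccRing n)) m (substS S (derivative (AccRing n) G) * pd i S)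
      = coeff (R := (AccRing n)) m
          (substS S (derivative (AccRing n) (ptrunc (m+1) G)) * pd i S) := by
    rw [coeff_mul, coeff_mul]
    apply Finset.sum_congr rfl
    intro p hp
    have hp' := Finset.HasAntidiagonal.mem_antidiagonal.mp hp
    rcases Nat.eq_zero_or_pos p.2 with h2 | h2
    · rw [h2, coeff_zero_eq_constantCoeff]
      rw [← coeff_zero_eq_constantCoeff, hpdS0, mul_zero, mul_zero]
    · refine congrArg (· * _) ?_
      apply substS_congr
      intro k hk
      rw [coeff_derivative, coeff_derivative, coeff_ptrunc, if_pos (by omega)]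
  rw [e1, map_add, e2, e3, ← map_add]
  refine congrArg (coeff (R := AccRing n) m) ?_
  rw [ptrunc, substS_sum, pd_sum, pd_sum, substS_sum, map_sum, substS_sum, Finset.sum_mul,
    ← Finset.sum_add_distrib]
  apply Finset.sum_congr rfl
  intro j _
  exact pd_substS_monomial i hS _ j

section QAlg
variable {A : Type*} [CommRing A] [Algebra ℚ A]

lemma derivative_exp : derivative A (exp A) = exp A := by
  ext m : 1
  rw [coeff_derivative, coeff_exp, coeff_exp]
  have h1 : ((m : A) + 1) = algebraMap ℚ A ((m : ℚ) + 1) := by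
    rw [map_add, map_natCast, map_one]
  rw [h1, ← map_mul]
  congr 1
  rw [Nat.factorial_succ]
  push_cast
  rw [div_mul_eq_mul_div, div_eq_div_iff (by positivity) (by positivity)]
  ring

lemma coeff_theta (G : PowerSeries A) (m : ℕ) :
    coeff (R := A) m (theta G) = (m : A) * coeff (R := A) m G := by
  rcases m with _ | k
  · simp [theta]
  · rw [theta, coeff_succ_X_mul, coeff_derivative]
    push_cast
    ring

lemma theta_theta_theta_eich {H : PowerSeries A} (hH0 : constantCoeff (R := A) H = 0) :
    theta (theta (theta (eich H))) = H := by
  ext m : 1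
  rw [coeff_theta, coeff_theta, coeff_theta]
  rcases m with _ | k
  · simp [← coeff_zero_eq_constantCoeff] at hH0
    simp [hH0]
  · rw [eich, coeff_mk]
    have hmul : ∀ x : A, ((k+1 : ℕ) : A) * x = ((k+1 : ℕ) : ℚ) • x := by
      intro x
      rw [Algebra.smul_def, map_natCast]
    rw [hmul, hmul, hmul, smul_smul, smul_smul, smul_smul]
    have : ((k+1:ℕ):ℚ) * ((k+1:ℕ):ℚ) * ((k+1:ℕ):ℚ) * ((((k+1:ℕ):ℚ)^3)⁻¹) = 1 := by
      have hk : ((k+1:ℕ):ℚ) ≠ 0 := by positivity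
      field_simp
    rw [this, one_smul]

lemma constantCoeff_expS (S : PowerSeries A) : constantCoeff (R := A) (expS S) = 1 := by
  rw [expS, constantCoeff_substS, constantCoeff_exp]

lemma derivative_expS {S : PowerSeries A} (hS : constantCoeff (R := A) S = 0) :
    derivative A (expS S) = expS S * derivative A S := by
  rw [expS, derivative_substS hS, derivative_exp]

end QAlg

lemma pd_exp : pd i (exp (AccRing n)) = 0 := by
  ext m : 1
  rw [coeff_pd, coeff_exp, map_zero]
  have : algebraMap ℚ (AccRing n) (1 / m.factorial : ℚ)
      = MvPolynomial.C (algebraMap ℚ ℂ (1 / m.factorial : ℚ)) := rfl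
  rw [this, MvPolynomial.pderiv_C]

lemma pd_expS {S : PowerSeries (AccRing n)} (hS : constantCoeff (R := (AccRing n)) S = 0) :
    pd i (expS S) = expS S * pd i S := by
  rw [expS, pd_substS i hS, pd_exp, substS_zero, zero_add, derivative_exp]

variable (α : Fin (n - 2) → ℂ)

lemma derivative_mul' (u v : PowerSeries A) :
    derivative A (u * v) = u * derivative A v + v * derivative A u := by
  rw [Derivation.leibniz, smul_eq_mul, smul_eq_mul]

lemma Ppoly_eq : Ppoly n α = X * PhatPoly n α := rfl

lemma constantCoeff_PhatPoly :
    constantCoeff (R := (AccRing n)) (PhatPoly n α) = MvPolynomial.C (kappa n α) := by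
  rw [PhatPoly, map_prod]
  simp only [map_sub, constantCoeff_X, constantCoeff_C, zero_sub]
  have hneg : ∀ j : Fin (n-2), -(MvPolynomial.C (α j) : AccRing n)
      = (-1) * MvPolynomial.C (α j) := fun j => by ring
  rw [Finset.prod_congr rfl (fun j _ => hneg j), Finset.prod_mul_distrib, Finset.prod_const,
    Finset.card_univ, Fintype.card_fin, kappa, map_mul, map_pow, map_neg, map_one, map_prod]

lemma pd_PhatPoly : pd i (PhatPoly n α) = 0 := by
  rw [PhatPoly]
  apply Finset.prod_induction _ (fun u => pd i u = 0)
  · intro u v hu hv; rw [pd_mul, hu, hv, zero_mul, mul_zero, add_zero]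
  · exact pd_one i
  · intro j _
    rw [pd_sub, pd_X, pd_C, MvPolynomial.pderiv_C, map_zero, sub_zero]

lemma pd_Ppoly : pd i (Ppoly n α) = 0 := by
  rw [Ppoly_eq, pd_mul, pd_X, pd_PhatPoly, zero_mul, mul_zero, add_zero]

lemma pd_P1poly : pd i (P1poly n) = -(X ^ (i : ℕ)) := by
  rw [P1poly, pd_sub, pd_mul, pd_C, MvPolynomial.pderiv_C, map_zero, zero_mul, pd_sum]
  have hx : ∀ k : ℕ, pd i ((X : PowerSeries (AccRing n)) ^ k) = 0 := by
    intro k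
    rcases k with _ | k
    · simpa using pd_one i
    · rw [pd_pow, pd_X, mul_zero]
  rw [hx, mul_zero, zero_add, zero_sub]
  congr 1
  rw [Finset.sum_eq_single i]
  · rw [pd_mul, pd_C, MvPolynomial.pderiv_X_self, hx, mul_zero, add_zero, map_one, one_mul]
  · intro j _ hj
    rw [pd_mul, pd_C, MvPolynomial.pderiv_X_of_ne (by exact fun h => hj (by exact h ▸ rfl)),
      hx, mul_zero, add_zero, map_zero, zero_mul]
  · intro h; simp at h

lemma eq_zero_of_forall_X_pow_dvd (u : PowerSeries A) (h : ∀ m : ℕ, (X:PowerSeries A)^m ∣ u) :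
    u = 0 := by
  ext m : 1
  rw [map_zero]
  exact (X_pow_dvd_iff.mp (h (m+1))) m (by omega)

lemma eq_C_of_derivative_eq_zero {u : PowerSeries (AccRing n)}
    (h : derivative (AccRing n) u = 0) :
    u = C (R := (AccRing n)) (constantCoeff (R := (AccRing n)) u) := by
  ext m : 1
  rcases m with _ | k
  · simp [coeff_C]
  · rw [coeff_C, if_neg (by omega)]
    have := congrArg (coeff (R := (AccRing n)) k) h
    rw [coeff_derivative, map_zero] at this
    have hk : ((k:AccRing n) + 1) ≠ 0 := by
      have : ((k+1 : ℕ) : AccRing n) ≠ 0 := Nat.cast_ne_zero.mpr (by omega)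
      push_cast at this
      exact this
    exact (mul_eq_zero.mp this).resolve_right hk

lemma derivative_X_pow (k : ℕ) :
    derivative A ((X : PowerSeries A)^(k+1)) = ((k:PowerSeries A)+1) * X^k := by
  rw [Derivation.leibniz_pow, derivative_X, Nat.add_sub_cancel, smul_eq_mul, mul_one,
    nsmul_eq_mul]
  push_cast
  ring

lemma coeff_self_X_pow_mul (k : ℕ) (W : PowerSeries A) :
    coeff (R := A) k ((X:PowerSeries A)^k * W) = constantCoeff (R := A) W := by
  rw [coeff_X_pow_mul', if_pos (le_refl k), Nat.sub_self, coeff_zero_eq_constantCoeff]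

lemma coeff_lt_X_pow_mul {k l : ℕ} (h : k < l) (W : PowerSeries A) :
    coeff (R := A) k ((X:PowerSeries A)^l * W) = 0 := by
  rw [coeff_X_pow_mul', if_neg (by omega)]

lemma kappa_ne_zero (hα0 : ∀ j, α j ≠ 0) : kappa n α ≠ 0 := by
  rw [kappa]
  exact mul_ne_zero (pow_ne_zero _ (neg_ne_zero.mpr one_ne_zero))
    (Finset.prod_ne_zero_iff.mpr (fun j _ => hα0 j))

lemma Ckappa_ne_zero (hα0 : ∀ j, α j ≠ 0) : (MvPolynomial.C (kappa n α) : AccRing n) ≠ 0 := by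
  simpa using kappa_ne_zero α hα0

lemma natCast_succ_ne_zero (j : ℕ) : ((j : AccRing n) + 1) ≠ 0 := by
  have : ((j+1 : ℕ) : AccRing n) ≠ 0 := Nat.cast_ne_zero.mpr (by omega)
  push_cast at this
  exact this

lemma first_order_unique {y u : PowerSeries (AccRing n)}
    (hy1 : constantCoeff (R := (AccRing n)) y = 1)
    (h : y * derivative (AccRing n) u = 2 * derivative (AccRing n) y * u)
    (h0 : constantCoeff (R := (AccRing n)) u = 0) : u = 0 := by
  apply eq_zero_of_forall_X_pow_dvd
  intro m
  induction m with
  | zero => simpa using one_dvd u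
  | succ k ih =>
    rcases k with _ | j
    · simpa using X_dvd_iff.mpr h0
    · obtain ⟨v, hv⟩ := ih
      suffices hv0 : constantCoeff (R := (AccRing n)) v = 0 by
        obtain ⟨w, hw⟩ := X_dvd_iff.mpr hv0
        exact ⟨w, by rw [hv, hw]; ring⟩
      have hc := congrArg (coeff (R := (AccRing n)) j) h
      rw [hv] at hc
      have hd : derivative (AccRing n) ((X:PowerSeries (AccRing n))^(j+1) * v)
          = X^j * (((j:PowerSeries (AccRing n))+1) * v) + X^(j+1) * derivative (AccRing n) v := by
        rw [derivative_mul', derivative_X_pow]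
        ring
      have hL : y * derivative (AccRing n) ((X:PowerSeries (AccRing n))^(j+1) * v)
          = X^j * (((j:PowerSeries (AccRing n))+1) * (y * v))
            + X^(j+1) * (y * derivative (AccRing n) v) := by
        rw [hd]; ring
      have hR : 2 * derivative (AccRing n) y * ((X:PowerSeries (AccRing n))^(j+1) * v)
          = X^(j+1) * (2 * derivative (AccRing n) y * v) := by ring
      rw [hL, hR, map_add, coeff_self_X_pow_mul, coeff_lt_X_pow_mul (by omega),
        coeff_lt_X_pow_mul (by omega), add_zero] at hc
      rw [map_mul, map_mul, hy1, one_mul] at hc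
      have hj1 : (constantCoeff (R := (AccRing n)) ((j:PowerSeries (AccRing n))+1)) ≠ 0 := by
        rw [map_add, map_one]
        have : constantCoeff (R := (AccRing n)) (j : PowerSeries (AccRing n)) = (j : AccRing n) := by
          rw [← map_natCast (C (R := (AccRing n))) j, constantCoeff_C]
        rw [this]
        exact natCast_succ_ne_zero j
      exact (mul_eq_zero.mp hc).resolve_left hj1

lemma Lop_unique (hα0 : ∀ j, α j ≠ 0) {u : PowerSeries (AccRing n)}
    (hLu : Lop n α u = 0) (h0 : constantCoeff (R := (AccRing n)) u = 0) : u = 0 := by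
  apply eq_zero_of_forall_X_pow_dvd
  intro m
  induction m with
  | zero => simpa using one_dvd u
  | succ k ih =>
    rcases k with _ | j
    · simpa using X_dvd_iff.mpr h0
    · obtain ⟨v, hv⟩ := ih
      suffices hv0 : constantCoeff (R := (AccRing n)) v = 0 by
        obtain ⟨w, hw⟩ := X_dvd_iff.mpr hv0
        exact ⟨w, by rw [hv, hw]; ring⟩
      have hc := congrArg (coeff (R := (AccRing n)) j) hLu
      rw [hv, map_zero] at hc
      have hd : derivative (AccRing n) ((X:PowerSeries (AccRing n))^(j+1) * v)
          = X^j * (((j:PowerSeries (AccRing n))+1) * v) + X^(j+1) * derivative (AccRing n) v := by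
        rw [derivative_mul', derivative_X_pow]
        ring
      have hPdu : Ppoly n α * derivative (AccRing n) ((X:PowerSeries (AccRing n))^(j+1) * v)
          = X^(j+1) * (((j:PowerSeries (AccRing n))+1) * (PhatPoly n α * v))
            + X^(j+2) * (PhatPoly n α * derivative (AccRing n) v) := by
        rw [hd, Ppoly_eq]; ring
      have hP1u : P1poly n * ((X:PowerSeries (AccRing n))^(j+1) * v)
          = X^(j+1) * (P1poly n * v) := by ring
      rw [Lop, hPdu, hP1u] at hc
      rw [map_add (derivative (AccRing n))] at hc
      rw [map_add, map_add, coeff_derivative, coeff_derivative, coeff_self_X_pow_mul,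
        coeff_lt_X_pow_mul (by omega), coeff_lt_X_pow_mul (by omega), zero_mul, add_zero,
        add_zero] at hc
      rw [map_mul, map_mul, constantCoeff_PhatPoly] at hc
      have h1 : (constantCoeff (R := (AccRing n)) ((j:PowerSeries (AccRing n))+1)) = (j:AccRing n)+1 := by
        rw [map_add, map_one, ← map_natCast (C (R := (AccRing n))) j, constantCoeff_C]
      rw [h1] at hc
      have h2 := (mul_eq_zero.mp hc).resolve_right (natCast_succ_ne_zero j)
      have h3 := (mul_eq_zero.mp h2).resolve_left (natCast_succ_ne_zero j)
      exact (mul_eq_zero.mp h3).resolve_left (Ckappa_ne_zero α hα0)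

noncomputable def Kc (n : ℕ) (α : Fin (n - 2) → ℂ) : PowerSeries (AccRing n) :=
  C (R := (AccRing n)) (MvPolynomial.C (kappa n α))

lemma derivative_Kc : derivative (AccRing n) (Kc n α) = 0 := derivative_C

lemma pd_Kc : pd i (Kc n α) = 0 := by
  rw [Kc, pd_C, MvPolynomial.pderiv_C, map_zero]

lemma Kc_ne_zero (hα0 : ∀ j, α j ≠ 0) : Kc n α ≠ 0 := by
  rw [Kc]
  intro h
  exact Ckappa_ne_zero α hα0 (by simpa using congrArg (constantCoeff (R := (AccRing n))) h)

lemma derivative_two : derivative A (2 : PowerSeries A) = 0 := by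
  have h : (2 : PowerSeries A) = C (R := A) 2 := by rw [map_ofNat]
  rw [h, derivative_C]

lemma pd_two : pd i (2 : PowerSeries (AccRing n)) = 0 := by
  have h : (2 : PowerSeries (AccRing n)) = C (R := (AccRing n)) 2 := by rw [map_ofNat]
  rw [h, pd_C]
  have h2 : (2 : AccRing n) = MvPolynomial.C 2 := (map_ofNat MvPolynomial.C 2).symm
  rw [h2, MvPolynomial.pderiv_C, map_zero]

lemma pd_zero : pd i (0 : PowerSeries (AccRing n)) = 0 := by
  ext m : 1; simp [coeff_pd]

lemma wronskian_id (u v : PowerSeries (AccRing n)) :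
    derivative (AccRing n) (Ppoly n α *
        (u * derivative (AccRing n) v - v * derivative (AccRing n) u))
      = u * Lop n α v - v * Lop n α u := by
  have h1 : Ppoly n α * (u * derivative (AccRing n) v - v * derivative (AccRing n) u)
      = u * (Ppoly n α * derivative (AccRing n) v)
        - v * (Ppoly n α * derivative (AccRing n) u) := by ring
  rw [h1, map_sub, derivative_mul' u, derivative_mul' v, Lop, Lop]
  ring

lemma pd_Lop (u : PowerSeries (AccRing n)) :
    pd i (Lop n α u) = Lop n α (pd i u) - X ^ (i : ℕ) * u := by
  rw [Lop, Lop, pd_add, pd_derivative, pd_mul, pd_Ppoly, pd_mul, pd_P1poly, pd_derivative,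
    zero_mul, zero_add]
  ring

lemma key1 (y w : PowerSeries (AccRing n)) :
    y * Lop n α (y * w)
      = w * y * Lop n α y
        + derivative (AccRing n) (Ppoly n α * (y * y) * derivative (AccRing n) w) := by
  rw [Lop, Lop]
  have e1 : Ppoly n α * (y * y) * derivative (AccRing n) w
      = (y * y) * (Ppoly n α * derivative (AccRing n) w) := by ring
  rw [e1, derivative_mul' (y*y), derivative_mul' y y, derivative_mul' y w]
  have e2 : Ppoly n α * (y * derivative (AccRing n) w + w * derivative (AccRing n) y)
      = y * (Ppoly n α * derivative (AccRing n) w)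
        + w * (Ppoly n α * derivative (AccRing n) y) := by ring
  rw [e2, map_add, derivative_mul' y, derivative_mul' w]
  ring

lemma constantCoeff_Ppoly : constantCoeff (R := (AccRing n)) (Ppoly n α) = 0 := by
  rw [Ppoly_eq, map_mul, constantCoeff_X, zero_mul]

section MainODE

variable {y b yinv Q : PowerSeries (AccRing n)}

lemma constantCoeff_pd (u : PowerSeries (AccRing n)) :
    constantCoeff (R := (AccRing n)) (pd i u)
      = MvPolynomial.pderiv i (constantCoeff (R := (AccRing n)) u) := by
  rw [← coeff_zero_eq_constantCoeff, coeff_pd, coeff_zero_eq_constantCoeff]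

lemma hW_lemma (hy1 : constantCoeff (R := (AccRing n)) y = 1)
    (hy : Lop n α y = 0)
    (hb : Lop n α b + 2 * PhatPoly n α * derivative (AccRing n) y
        + derivative (AccRing n) (PhatPoly n α) * y = 0) :
    PhatPoly n α * (y * y)
      + Ppoly n α * (y * derivative (AccRing n) b - b * derivative (AccRing n) y)
      = Kc n α := by
  have hDF : derivative (AccRing n) (PhatPoly n α * (y * y)
      + Ppoly n α * (y * derivative (AccRing n) b - b * derivative (AccRing n) y)) = 0 := by
    rw [map_add, wronskian_id α y b, hy, mul_zero, sub_zero,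
      derivative_mul' (PhatPoly n α) (y*y), derivative_mul' y y]
    linear_combination y * hb
  have hF := eq_C_of_derivative_eq_zero hDF
  rw [hF, map_add, map_mul, map_mul, map_mul, constantCoeff_PhatPoly, constantCoeff_Ppoly,
    hy1, Kc]
  simp

lemma Lop_pd_y (hy : Lop n α y = 0) :
    Lop n α (pd i y) = X ^ (i : ℕ) * y := by
  have h := congrArg (pd i) hy
  rw [pd_Lop, pd_zero] at h
  linear_combination h

lemma Lop_pd_b
    (hb : Lop n α b + 2 * PhatPoly n α * derivative (AccRing n) y
        + derivative (AccRing n) (PhatPoly n α) * y = 0) :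
    Lop n α (pd i b)
      = X ^ (i : ℕ) * b - 2 * PhatPoly n α * derivative (AccRing n) (pd i y)
        - derivative (AccRing n) (PhatPoly n α) * pd i y := by
  have h := congrArg (pd i) hb
  simp only [pd_add, pd_mul, pd_derivative, pd_two, pd_PhatPoly, pd_zero, pd_Lop,
    map_zero, zero_mul, mul_zero, add_zero, zero_add] at h
  linear_combination h

lemma hE3_lemma (hy1 : constantCoeff (R := (AccRing n)) y = 1)
    (hy : Lop n α y = 0)
    (hb : Lop n α b + 2 * PhatPoly n α * derivative (AccRing n) y
        + derivative (AccRing n) (PhatPoly n α) * y = 0) :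
    Ppoly n α * (y * derivative (AccRing n) (pd i b) - pd i b * derivative (AccRing n) y)
      - Ppoly n α * (b * derivative (AccRing n) (pd i y) - pd i y * derivative (AccRing n) b)
      + 2 * (PhatPoly n α * (y * pd i y)) = 0 := by
  have hb' : Lop n α b = -(2 * PhatPoly n α * derivative (AccRing n) y)
      - derivative (AccRing n) (PhatPoly n α) * y := by linear_combination hb
  have hDF : derivative (AccRing n)
      (Ppoly n α * (y * derivative (AccRing n) (pd i b) - pd i b * derivative (AccRing n) y)
        - Ppoly n α * (b * derivative (AccRing n) (pd i y)
          - pd i y * derivative (AccRing n) b)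
        + 2 * (PhatPoly n α * (y * pd i y))) = 0 := by
    rw [map_add, map_sub, wronskian_id α y (pd i b), wronskian_id α b (pd i y),
      Lop_pd_y i α hy, Lop_pd_b i α hb, hy, hb']
    simp only [derivative_mul', derivative_two]
    ring
  have hF := eq_C_of_derivative_eq_zero hDF
  have hccpdy : constantCoeff (R := (AccRing n)) (pd i y) = 0 := by
    rw [constantCoeff_pd, hy1, Derivation.map_one_eq_zero]
  rw [hF]
  have hcc : constantCoeff (R := (AccRing n))
      (Ppoly n α * (y * derivative (AccRing n) (pd i b) - pd i b * derivative (AccRing n) y)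
        - Ppoly n α * (b * derivative (AccRing n) (pd i y)
          - pd i y * derivative (AccRing n) b)
        + 2 * (PhatPoly n α * (y * pd i y))) = 0 := by
    simp [map_add, map_sub, map_mul, constantCoeff_Ppoly, hccpdy]
  rw [hcc, map_zero]

end MainODE

lemma derivative_Kc_mul (u : PowerSeries (AccRing n)) :
    derivative (AccRing n) (Kc n α * u) = Kc n α * derivative (AccRing n) u := by
  rw [derivative_mul', derivative_Kc, mul_zero, add_zero]

lemma Lop_sub (u v : PowerSeries (AccRing n)) :
    Lop n α (u - v) = Lop n α u - Lop n α v := by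
  rw [Lop, Lop, Lop, map_sub]
  have e : Ppoly n α * (derivative (AccRing n) u - derivative (AccRing n) v)
      = Ppoly n α * derivative (AccRing n) u - Ppoly n α * derivative (AccRing n) v := by ring
  rw [e, map_sub]
  ring

lemma Lop_Kc_mul (u : PowerSeries (AccRing n)) :
    Lop n α (Kc n α * u) = Kc n α * Lop n α u := by
  rw [Lop, Lop, derivative_Kc_mul]
  have e : Ppoly n α * (Kc n α * derivative (AccRing n) u)
      = Kc n α * (Ppoly n α * derivative (AccRing n) u) := by ring
  rw [e, derivative_Kc_mul]
  ring

lemma Lop_Kcube (u : PowerSeries (AccRing n)) :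
    Lop n α (Kc n α * Kc n α * Kc n α * u)
      = Kc n α * Kc n α * Kc n α * Lop n α u := by
  have e : Kc n α * Kc n α * Kc n α * u = Kc n α * (Kc n α * (Kc n α * u)) := by ring
  rw [e, Lop_Kc_mul, Lop_Kc_mul, Lop_Kc_mul]
  ring

lemma Ppoly_ne_zero : Ppoly n α ≠ 0 := by
  rw [Ppoly_eq]
  apply mul_ne_zero X_ne_zero
  rw [PhatPoly]
  apply Finset.prod_ne_zero_iff.mpr
  intro j _
  intro h
  have := congrArg (coeff (R := (AccRing n)) 1) h
  rw [map_sub, coeff_one_X, coeff_C, if_neg one_ne_zero, sub_zero, map_zero] at this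
  exact one_ne_zero this

lemma constantCoeff_eich (H : PowerSeries A') [CommRing A'] [Algebra ℚ A'] :
    constantCoeff (R := A') (eich H) = 0 := by
  rw [← coeff_zero_eq_constantCoeff, eich, coeff_mk]
  norm_num


set_option maxHeartbeats 2000000 in
/-- for `G = (S·y^m) ∘ T` with `S ∈ ℂ[t]`,
`κ²·∂_i G = m·(θH̃_i)·G + 2·H̃_i·(θG)`. -/
theorem stmt13 (n : ℕ) (hn : 4 ≤ n) (α : Fin (n - 2) → ℂ)
    (hα0 : ∀ j, α j ≠ 0) (hαinj : Function.Injective α)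
    (y b yinv Q : PowerSeries (AccRing n))
    (hy1 : constantCoeff (R := (AccRing n)) y = 1) (hy : Lop n α y = 0)
    (hb0 : constantCoeff (R := (AccRing n)) b = 0)
    (hb : Lop n α b + 2 * PhatPoly n α * derivative (AccRing n) y
        + derivative (AccRing n) (PhatPoly n α) * y = 0)
    (hyinv : y * yinv = 1)
    (hQ : Q = X * expS (b * yinv))
    (i : Fin (n - 3)) (H : PowerSeries (AccRing n))
    (hH0 : constantCoeff (R := (AccRing n)) H = 0)
    (hH : substS Q H = Ppoly n α * X ^ (i : ℕ) * y ^ 4)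
    (T : PowerSeries (AccRing n)) (hT0 : constantCoeff (R := (AccRing n)) T = 0)
    (hTQ : substS Q T = X) (hQT : substS T Q = X)
    (S : Polynomial ℂ) (m : ℕ) (G : PowerSeries (AccRing n))
    (hG : G = substS T
        ((PowerSeries.mk fun d => (MvPolynomial.C (S.coeff d) : AccRing n)) * y ^ m)) :
    C (R := (AccRing n)) (MvPolynomial.C (kappa n α)) ^ 2 * pd i G
      = (m : PowerSeries (AccRing n)) * theta (eich H) * G + 2 * eich H * theta G := by
  classical
  have hQ0 : constantCoeff (R := (AccRing n)) Q = 0 := by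
    rw [hQ, map_mul, constantCoeff_X, zero_mul]
  have hccb : constantCoeff (R := (AccRing n)) (b * yinv) = 0 := by
    rw [map_mul, hb0, zero_mul]
  have hyne : y ≠ 0 := by
    intro h0
    rw [h0, map_zero] at hy1
    exact zero_ne_one hy1
  have hKne : Kc n α ≠ 0 := Kc_ne_zero α hα0
  have hPne : Ppoly n α ≠ 0 := Ppoly_ne_zero α
  have hW := hW_lemma α hy1 hy hb
  -- derivative of yinv
  have hdyinv : y * derivative (AccRing n) yinv + yinv * derivative (AccRing n) y = 0 := by
    have h' := congrArg (derivative (AccRing n)) hyinv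
    rw [derivative_mul', Derivation.map_one_eq_zero] at h'
    linear_combination h'
  -- the ODE for Q
  have hODEQ : Ppoly n α * (y * y) * derivative (AccRing n) Q = Kc n α * Q := by
    have hW' := hW
    rw [Ppoly_eq] at hW'
    rw [hQ, derivative_mul' X (expS (b * yinv)), derivative_X, mul_one,
      derivative_expS hccb, derivative_mul' b yinv, Ppoly_eq, ← hW']
    linear_combination (X * X * PhatPoly n α * expS (b * yinv) * y * b) * hdyinv
      + (X * X * PhatPoly n α * expS (b * yinv)
          * (y * derivative (AccRing n) b - b * derivative (AccRing n) y)) * hyinv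
  -- the pulled-back theta operator
  have hDt : ∀ F : PowerSeries (AccRing n), Kc n α * substS Q (theta F)
      = Ppoly n α * (y * y) * derivative (AccRing n) (substS Q F) := by
    intro F
    rw [theta, substS_mul hQ0, substS_X _ hQ0, derivative_substS hQ0]
    linear_combination (-(substS Q (derivative (AccRing n) F))) * hODEQ
  set hser := substS Q (eich H) with hhser
  have s1 := hDt (eich H)
  have s2 := hDt (theta (eich H))
  have s3 := hDt (theta (theta (eich H)))
  rw [theta_theta_theta_eich hH0] at s3
  have e2 : Kc n α * (Kc n α * substS Q (theta (theta (eich H))))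
      = Ppoly n α * (y * y) * derivative (AccRing n)
          (Ppoly n α * (y * y) * derivative (AccRing n) hser) := by
    rw [s2]
    have e : Kc n α * (Ppoly n α * (y * y)
          * derivative (AccRing n) (substS Q (theta (eich H))))
        = Ppoly n α * (y * y)
          * derivative (AccRing n) (Kc n α * substS Q (theta (eich H))) := by
      rw [derivative_Kc_mul]; ring
    rw [e, s1]
  have e3 : Kc n α * (Kc n α * (Kc n α * substS Q H))
      = Ppoly n α * (y * y) * derivative (AccRing n) (Ppoly n α * (y * y)
          * derivative (AccRing n) (Ppoly n α * (y * y) * derivative (AccRing n) hser)) := by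
    rw [s3]
    have e : Kc n α * (Kc n α * (Ppoly n α * (y * y)
          * derivative (AccRing n) (substS Q (theta (theta (eich H))))))
        = Ppoly n α * (y * y) * derivative (AccRing n)
            (Kc n α * (Kc n α * substS Q (theta (theta (eich H))))) := by
      rw [derivative_Kc_mul, derivative_Kc_mul]; ring
    rw [e, e2]
  have hEh : Ppoly n α * (y * y) * derivative (AccRing n) (Ppoly n α * (y * y)
        * derivative (AccRing n) (Ppoly n α * (y * y) * derivative (AccRing n) hser))
      = Kc n α * Kc n α * Kc n α * (Ppoly n α * X ^ (i : ℕ) * (y * y * y * y)) := by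
    rw [← e3, hH]
    ring
  -- identity (B)
  have hccpdy : constantCoeff (R := (AccRing n)) (pd i y) = 0 := by
    rw [constantCoeff_pd, hy1, Derivation.map_one_eq_zero]
  have k1 := key1 α y (Ppoly n α * (y * y) * derivative (AccRing n) hser)
  rw [hy, mul_zero, zero_add] at k1
  have hfac : Ppoly n α * (y * y * y)
      * (Lop n α (y * (Ppoly n α * (y * y) * derivative (AccRing n) hser))
          - Kc n α * Kc n α * Kc n α * (X ^ (i : ℕ) * y)) = 0 := by
    linear_combination (Ppoly n α * (y * y)) * k1 + hEh
  have hPy3ne : Ppoly n α * (y * y * y) ≠ 0 :=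
    mul_ne_zero hPne (mul_ne_zero (mul_ne_zero hyne hyne) hyne)
  have hLv : Lop n α (y * (Ppoly n α * (y * y) * derivative (AccRing n) hser))
      = Kc n α * Kc n α * Kc n α * (X ^ (i : ℕ) * y) := by
    have h0 := (mul_eq_zero.mp hfac).resolve_left hPy3ne
    linear_combination h0
  have hB : Kc n α * Kc n α * Kc n α * pd i y
      = Ppoly n α * (y * y * y) * derivative (AccRing n) hser := by
    have hu : Kc n α * Kc n α * Kc n α * pd i y
        - y * (Ppoly n α * (y * y) * derivative (AccRing n) hser) = 0 := by
      apply Lop_unique α hα0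
      · rw [Lop_sub, Lop_Kcube, Lop_pd_y i α hy, hLv]
        ring
      · simp [map_sub, map_mul, constantCoeff_Ppoly, hccpdy]
    linear_combination hu
  -- identity (chi)
  have hE3 := hE3_lemma i α hy1 hy hb
  have hh0 : constantCoeff (R := (AccRing n)) hser = 0 := by
    rw [hhser, constantCoeff_substS, constantCoeff_eich]
  have hChi : Kc n α * Kc n α * Kc n α * (y * pd i b - b * pd i y)
      + 2 * Kc n α * (hser * (y * y)) = 0 := by
    apply first_order_unique hy1
    · have hPz : Ppoly n α * (y * derivative (AccRing n)
          (Kc n α * Kc n α * Kc n α * (y * pd i b - b * pd i y)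
            + 2 * Kc n α * (hser * (y * y)))
          - 2 * derivative (AccRing n) y
            * (Kc n α * Kc n α * Kc n α * (y * pd i b - b * pd i y)
              + 2 * Kc n α * (hser * (y * y)))) = 0 := by
        have hdK3 : derivative (AccRing n) (Kc n α * Kc n α * Kc n α) = 0 := by
          rw [derivative_mul', derivative_mul', derivative_Kc]
          ring
        have hd2K : derivative (AccRing n) (2 * Kc n α) = 0 := by
          rw [derivative_mul', derivative_two, derivative_Kc]
          ring
        have hDchi : derivative (AccRing n)
            (Kc n α * Kc n α * Kc n α * (y * pd i b - b * pd i y)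
              + 2 * Kc n α * (hser * (y * y)))
            = Kc n α * Kc n α * Kc n α
                * (y * derivative (AccRing n) (pd i b) + pd i b * derivative (AccRing n) y
                  - (b * derivative (AccRing n) (pd i y)
                    + pd i y * derivative (AccRing n) b))
              + 2 * Kc n α * (hser * (y * derivative (AccRing n) y
                  + y * derivative (AccRing n) y) + (y * y) * derivative (AccRing n) hser) := by
          rw [map_add, derivative_mul' (Kc n α * Kc n α * Kc n α),
            derivative_mul' (2 * Kc n α), map_sub, derivative_mul' y (pd i b),
            derivative_mul' b (pd i y), derivative_mul' hser (y * y), derivative_mul' y y,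
            hdK3, hd2K]
          ring
        rw [hDchi]
        linear_combination (Kc n α * Kc n α * Kc n α * y) * hE3
          + (-2 * Kc n α * Kc n α * Kc n α * pd i y) * hW + (-2 * Kc n α) * hB
      have h0 := (mul_eq_zero.mp hPz).resolve_left hPne
      linear_combination h0
    · have hccpdb : constantCoeff (R := (AccRing n)) (pd i b) = 0 := by
        rw [constantCoeff_pd, hb0, map_zero]
      simp [map_add, map_sub, map_mul, hccpdy, hccpdb, hh0]
  -- pd of Q
  have hpdyinv : y * pd i yinv + yinv * pd i y = 0 := by
    have h' := congrArg (pd i) hyinv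
    rw [pd_mul, pd_one] at h'
    linear_combination h'
  have hpdQ : pd i Q = Q * (b * pd i yinv + yinv * pd i b) := by
    rw [hQ, pd_mul, pd_X, zero_mul, zero_add, pd_expS i hccb, pd_mul]
    ring
  have hpdQ3 : Kc n α * Kc n α * Kc n α * pd i Q = -(2 * Kc n α * (hser * Q)) := by
    have hyy : y * y ≠ 0 := mul_ne_zero hyne hyne
    apply mul_left_cancel₀ hyy
    rw [hpdQ]
    linear_combination Q * hChi + (Kc n α * Kc n α * Kc n α * Q * b * y) * hpdyinv
      + (Kc n α * Kc n α * Kc n α * Q * (y * pd i b - b * pd i y)) * hyinv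
  -- assembly
  set Sser := (PowerSeries.mk fun d => (MvPolynomial.C (S.coeff d) : AccRing n)) with hSser
  have hpdSser : pd i Sser = 0 := by
    ext k : 1
    simp [coeff_pd, hSser, MvPolynomial.pderiv_C]
  have hg : substS Q G = Sser * y ^ m := by
    rw [hG, substS_assoc hT0 hQ0, hTQ, substS_X_right]
  have hinj : ∀ u v : PowerSeries (AccRing n), substS Q u = substS Q v → u = v := by
    intro u v huv
    have h2 := congrArg (substS T) huv
    rwa [substS_assoc hQ0 hT0, substS_assoc hQ0 hT0, hQT, substS_X_right,
      substS_X_right] at h2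
  have hypm : y * pd i (y ^ m) = (m : PowerSeries (AccRing n)) * y ^ m * pd i y := by
    rcases m with _ | k
    · simp [pd_one]
    · rw [pd_pow]
      push_cast
      ring
  have key : Kc n α * Kc n α * Kc n α * (Sser * pd i (y ^ m))
      = (m : PowerSeries (AccRing n))
          * (Ppoly n α * (y * y) * derivative (AccRing n) hser) * (Sser * y ^ m) := by
    apply mul_left_cancel₀ hyne
    linear_combination (Kc n α * Kc n α * Kc n α * Sser) * hypm
      + ((m : PowerSeries (AccRing n)) * Sser * y ^ m) * hB
  have hsub : substS Q (pd i G)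
      = Sser * pd i (y ^ m) - substS Q (derivative (AccRing n) G) * pd i Q := by
    have h1 := pd_substS i hQ0 G
    rw [hg, pd_mul, hpdSser, zero_mul, zero_add] at h1
    linear_combination -h1
  have hKC : C (R := (AccRing n)) (MvPolynomial.C (kappa n α)) = Kc n α := rfl
  rw [hKC]
  apply mul_left_cancel₀ hKne
  apply hinj
  -- expand substS Q of both sides
  have hLHS : substS Q (Kc n α * (Kc n α ^ 2 * pd i G))
      = Kc n α * Kc n α * Kc n α * substS Q (pd i G) := by
    have e : Kc n α * (Kc n α ^ 2 * pd i G) = Kc n α * (Kc n α * (Kc n α * pd i G)) := by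
      ring
    rw [e, substS_mul hQ0, substS_mul hQ0, substS_mul hQ0, Kc, substS_C]
    ring
  have hsθG : substS Q (theta G) = Q * substS Q (derivative (AccRing n) G) := by
    rw [theta, substS_mul hQ0, substS_X _ hQ0]
  have hsm : substS Q ((m : ℕ) : PowerSeries (AccRing n))
      = ((m : ℕ) : PowerSeries (AccRing n)) := by
    have e : ((m : ℕ) : PowerSeries (AccRing n)) = C (R := (AccRing n)) ((m : ℕ) : AccRing n) :=
      (map_natCast (C (R := (AccRing n))) m).symm
    rw [e, substS_C]
  have hs2 : substS Q (2 : PowerSeries (AccRing n)) = 2 := by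
    have e : (2 : PowerSeries (AccRing n)) = C (R := (AccRing n)) 2 := by rw [map_ofNat]
    rw [e, substS_C]
  have hRHS : substS Q (Kc n α * ((m : PowerSeries (AccRing n)) * theta (eich H) * G
        + 2 * eich H * theta G))
      = Kc n α * ((m : PowerSeries (AccRing n)) * substS Q (theta (eich H)) * (Sser * y ^ m)
          + 2 * hser * (Q * substS Q (derivative (AccRing n) G))) := by
    rw [substS_mul hQ0, Kc, substS_C, substS_add, substS_mul hQ0, substS_mul hQ0,
      substS_mul hQ0, substS_mul hQ0, hsm, hs2, hsθG, hg, hhser]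
  rw [hLHS, hRHS, hsub]
  linear_combination key - (substS Q (derivative (AccRing n) G)) * hpdQ3
    - ((m : PowerSeries (AccRing n)) * (Sser * y ^ m)) * s1
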